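/- Let G = (V, E) be a graph with a linear order < on E. Then the chromatic polynomial of G satisfies χ(G, x) = (−1)^{|V|} (−x)^{k(G)} Σ_{F spanning forest of G with e(F) = 0} (1 − x)^{i(F)}, where the sum runs over all spanning forests of G having no externally active edge, i(F) is the number of internally active edges of F, and k(G) is the number of connected components of G. -/

import Mathlib

open Finset

attribute [local instance] Classical.propDecidable

/-- A multigraph on vertex type `V` with edge index type `E` is given by a map
`ends : E → Sym2 V` (loops and parallel edges are allowed).  For an edge subset
`A ⊆ E`, `edgeGraph ends A` is the simple graph on `V` whose adjacency is
witnessed by some edge of `A`; it determines the connected components of the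
spanning subgraph `(V, A)`. -/
def edgeGraph {V E : Type} (ends : E → Sym2 V) (A : Finset E) : SimpleGraph V where
  Adj a b := a ≠ b ∧ ∃ e ∈ A, ends e = s(a, b)
  symm := by
    constructor
    rintro a b ⟨hab, e, he, hs⟩
    exact ⟨Ne.symm hab, e, he, by rw [hs, Sym2.eq_swap]⟩
  loopless := by constructor; rintro a ⟨h, -⟩; exact h rfl

/-- `kc ends A` is the number of connected components of the spanning subgraph `(V, A)`. -/
noncomputable def kc {V E : Type} (ends : E → Sym2 V) (A : Finset E) : ℕ :=
  Nat.card (edgeGraph ends A).ConnectedComponent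

/-- `(V, A)` is a spanning forest of `(V, E)`: it is a forest
(`|A| + k((V,A)) = |V|`, which rules out loops, parallel edges and cycles)
with as many connected components as the whole graph. -/
def IsSpanningForest {V E : Type} [Fintype V] [Fintype E] (ends : E → Sym2 V)
    (A : Finset E) : Prop :=
  A.card + kc ends A = Fintype.card V ∧ kc ends A = kc ends Finset.univ

/-- `F - e + f`. -/
def swapEdge {E : Type} [DecidableEq E] (A : Finset E) (e f : E) : Finset E :=
  insert f (A.erase e)

/-- `e` is internally active in the spanning forest `(V, A)`. -/
def InternallyActive {V E : Type} [Fintype V] [Fintype E] [DecidableEq E] [LinearOrder E]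
    (ends : E → Sym2 V) (A : Finset E) (e : E) : Prop :=
  e ∈ A ∧ ¬ ∃ f, f ∉ A ∧ e < f ∧ IsSpanningForest ends (swapEdge A e f)

/-- `f` is externally active in the spanning forest `(V, A)`. -/
def ExternallyActive {V E : Type} [Fintype V] [Fintype E] [DecidableEq E] [LinearOrder E]
    (ends : E → Sym2 V) (A : Finset E) (f : E) : Prop :=
  f ∉ A ∧ ¬ ∃ e, e ∈ A ∧ f < e ∧ IsSpanningForest ends (swapEdge A e f)

/-- The set `E_i(F)` of internally active edges of the spanning forest `F = (V, A)`. -/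
noncomputable def intAct {V E : Type} [Fintype V] [Fintype E] [DecidableEq E] [LinearOrder E]
    (ends : E → Sym2 V) (A : Finset E) : Finset E :=
  Finset.univ.filter (InternallyActive ends A)

/-- The set `E_e(F)` of externally active edges of the spanning forest `F = (V, A)`. -/
noncomputable def extAct {V E : Type} [Fintype V] [Fintype E] [DecidableEq E] [LinearOrder E]
    (ends : E → Sym2 V) (A : Finset E) : Finset E :=
  Finset.univ.filter (ExternallyActive ends A)

/-- Number of proper colorings of the multigraph `(V, ends)` with `n` colors. -/
noncomputable def chromCount {V E : Type} [Fintype V] [Fintype E] (ends : E → Sym2 V)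
    (n : ℕ) : ℕ :=
  Nat.card {c : V → Fin n // ∀ e : E, ∀ a b : V, ends e = s(a, b) → c a ≠ c b}

set_option linter.unusedSectionVars false
set_option linter.unusedVariables false
set_option linter.unreachableTactic false
set_option linter.unusedTactic false

section Part1
variable {V E : Type} [Fintype V] [Fintype E] [DecidableEq E] (ends : E → Sym2 V)

def spanned (A : Finset E) (f : E) : Prop := kc ends (insert f A) = kc ends A

variable {ends}

instance (A : Finset E) : Finite (edgeGraph ends A).ConnectedComponent :=
  Finite.of_surjective _ Quot.mk_surjective

lemma edgeGraph_mono {A B : Finset E} (h : A ⊆ B) : edgeGraph ends A ≤ edgeGraph ends B := by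
  rintro a b ⟨hne, e, he, hs⟩
  exact ⟨hne, e, h he, hs⟩

lemma kc_mono {A B : Finset E} (h : A ⊆ B) : kc ends B ≤ kc ends A := by
  apply Nat.card_le_card_of_surjective
    (SimpleGraph.ConnectedComponent.map (SimpleGraph.Hom.ofLE (edgeGraph_mono h)))
  intro C
  refine C.ind (fun v => ?_)
  exact ⟨(edgeGraph ends A).connectedComponentMk v, rfl⟩

lemma kc_empty : kc ends (∅ : Finset E) = Fintype.card V := by
  have hbot : edgeGraph ends (∅ : Finset E) = ⊥ := by
    ext a b
    simp [edgeGraph]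
  have : Function.Bijective ((edgeGraph ends (∅ : Finset E)).connectedComponentMk) := by
    constructor
    · intro u v h
      have := SimpleGraph.ConnectedComponent.exact h
      rw [hbot, SimpleGraph.reachable_bot] at this
      exact this
    · intro C; exact C.ind (fun v => ⟨v, rfl⟩)
  rw [kc, ← Nat.card_eq_of_bijective _ this, Nat.card_eq_fintype_card]

lemma reach_of_adj_imp {G G' : SimpleGraph V} (h : ∀ u v, G.Adj u v → G'.Reachable u v)
    {u v : V} (hr : G.Reachable u v) : G'.Reachable u v := by
  obtain ⟨p⟩ := hr
  induction p with
  | nil => rfl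
  | cons ha _ ih => exact (h _ _ ha).trans ih

/-- Walk decomposition lemma for reachability after inserting an edge. -/
lemma reach_insert {A : Finset E} {f : E} {a b : V} (hab : ends f = s(a, b)) {u v : V}
    (h : (edgeGraph ends (insert f A)).Reachable u v) :
    (edgeGraph ends A).Reachable u v ∨
      ((edgeGraph ends A).Reachable u a ∧ (edgeGraph ends A).Reachable b v) ∨
      ((edgeGraph ends A).Reachable u b ∧ (edgeGraph ends A).Reachable a v) := by
  obtain ⟨p⟩ := h
  induction p with
  | nil => exact Or.inl (SimpleGraph.Reachable.refl _)
  | @cons u w v ha _ ih =>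
    obtain ⟨hne, e, he, hs⟩ := ha
    rcases Finset.mem_insert.mp he with rfl | heA
    · -- the new edge f
      rw [hab] at hs
      have hcase : (a = u ∧ b = w) ∨ (a = w ∧ b = u) := Sym2.eq_iff.mp hs
      rcases hcase with ⟨rfl, rfl⟩ | ⟨rfl, rfl⟩
      · rcases ih with h1 | ⟨h2, h3⟩ | ⟨h2, h3⟩
        · exact Or.inr (Or.inl ⟨SimpleGraph.Reachable.refl _, h1⟩)
        · exact Or.inl (h2.symm.trans h3)
        · exact Or.inl h3
      · rcases ih with h1 | ⟨h2, h3⟩ | ⟨h2, h3⟩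
        · exact Or.inr (Or.inr ⟨SimpleGraph.Reachable.refl _, h1⟩)
        · exact Or.inl h3
        · exact Or.inl (h2.symm.trans h3)
    · have hadj : (edgeGraph ends A).Adj u w := ⟨hne, e, heA, hs⟩
      rcases ih with h1 | ⟨h2, h3⟩ | ⟨h2, h3⟩
      · exact Or.inl ((hadj.reachable).trans h1)
      · exact Or.inr (Or.inl ⟨(hadj.reachable).trans h2, h3⟩)
      · exact Or.inr (Or.inr ⟨(hadj.reachable).trans h2, h3⟩)
end Part1

section Part2
variable {V E : Type} [Fintype V] [Fintype E] [DecidableEq E] {ends : E → Sym2 V}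

lemma sym2_exists (z : Sym2 V) : ∃ a b, z = s(a, b) :=
  Sym2.ind (fun a b => ⟨a, b, rfl⟩) z

private noncomputable def phi (ends : E → Sym2 V) (A : Finset E) (f : E) :
    (edgeGraph ends A).ConnectedComponent → (edgeGraph ends (insert f A)).ConnectedComponent :=
  SimpleGraph.ConnectedComponent.map
    (SimpleGraph.Hom.ofLE (edgeGraph_mono (Finset.subset_insert f A)))

lemma phi_mk {A : Finset E} {f : E} (v : V) :
    phi ends A f ((edgeGraph ends A).connectedComponentMk v) =
      (edgeGraph ends (insert f A)).connectedComponentMk v := rfl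

lemma phi_cases {A : Finset E} {f : E} {a b : V} (hab : ends f = s(a, b))
    (C D : (edgeGraph ends A).ConnectedComponent) (h : phi ends A f C = phi ends A f D) :
    C = D ∨ (C = (edgeGraph ends A).connectedComponentMk a ∧
              D = (edgeGraph ends A).connectedComponentMk b) ∨
      (C = (edgeGraph ends A).connectedComponentMk b ∧
        D = (edgeGraph ends A).connectedComponentMk a) := by
  revert h
  refine SimpleGraph.ConnectedComponent.ind₂ (fun u v h => ?_) C D
  have hr := SimpleGraph.ConnectedComponent.exact h
  rcases reach_insert hab hr with h1 | ⟨h2, h3⟩ | ⟨h2, h3⟩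
  · exact Or.inl (SimpleGraph.ConnectedComponent.sound h1)
  · exact Or.inr (Or.inl ⟨SimpleGraph.ConnectedComponent.sound h2,
      (SimpleGraph.ConnectedComponent.sound h3).symm⟩)
  · exact Or.inr (Or.inr ⟨SimpleGraph.ConnectedComponent.sound h2,
      (SimpleGraph.ConnectedComponent.sound h3).symm⟩)

lemma phi_surjective {A : Finset E} {f : E} : Function.Surjective (phi ends A f) := by
  intro C
  exact C.ind (fun v => ⟨(edgeGraph ends A).connectedComponentMk v, rfl⟩)

lemma kc_insert_of_reach {A : Finset E} {f : E} {a b : V} (hab : ends f = s(a, b))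
    (h : (edgeGraph ends A).Reachable a b) : kc ends (insert f A) = kc ends A := by
  have hinj : Function.Injective (phi ends A f) := by
    intro C D hCD
    rcases phi_cases hab C D hCD with h1 | ⟨h2, h3⟩ | ⟨h2, h3⟩
    · exact h1
    · rw [h2, h3]; exact SimpleGraph.ConnectedComponent.sound h
    · rw [h2, h3]; exact SimpleGraph.ConnectedComponent.sound h.symm
  exact (Nat.card_eq_of_bijective _ ⟨hinj, phi_surjective⟩).symm

lemma kc_le_insert (A : Finset E) (f : E) : kc ends A ≤ kc ends (insert f A) + 1 := by
  obtain ⟨a, b, hab⟩ := sym2_exists (ends f)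
  set G := edgeGraph ends A
  let g : G.ConnectedComponent →
      (edgeGraph ends (insert f A)).ConnectedComponent ⊕ PUnit.{1} := fun C =>
    if C = G.connectedComponentMk a then Sum.inr PUnit.unit else Sum.inl (phi ends A f C)
  have hinj : Function.Injective g := by
    intro C D h
    by_cases hC : C = G.connectedComponentMk a <;> by_cases hD : D = G.connectedComponentMk a <;>
      simp [g, hC, hD] at h
    · rw [hC, hD]
    · rcases phi_cases hab C D h with h1 | ⟨h2, h3⟩ | ⟨h2, h3⟩
      · exact h1
      · exact absurd h2 hC
      · exact absurd h3 hD
  calc kc ends A ≤ Nat.card ((edgeGraph ends (insert f A)).ConnectedComponent ⊕ PUnit.{1}) :=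
        Nat.card_le_card_of_injective g hinj
    _ = kc ends (insert f A) + 1 := by simp [Nat.card_sum, kc]

lemma kc_insert_lt_of_not_reach {A : Finset E} {f : E} {a b : V} (hab : ends f = s(a, b))
    (h : ¬ (edgeGraph ends A).Reachable a b) : kc ends (insert f A) < kc ends A := by
  have hne : a ≠ b := by rintro rfl; exact h (SimpleGraph.Reachable.refl _)
  have hadj : (edgeGraph ends (insert f A)).Adj a b :=
    ⟨hne, f, Finset.mem_insert_self f A, hab⟩
  have hmkne : (edgeGraph ends A).connectedComponentMk a ≠
      (edgeGraph ends A).connectedComponentMk b := by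
    intro hc; exact h (SimpleGraph.ConnectedComponent.exact hc)
  have hnotinj : ¬ Function.Injective (phi ends A f) := by
    intro hinj
    exact hmkne (hinj (SimpleGraph.ConnectedComponent.sound hadj.reachable))
  haveI := Fintype.ofFinite (edgeGraph ends A).ConnectedComponent
  haveI := Fintype.ofFinite (edgeGraph ends (insert f A)).ConnectedComponent
  have := Fintype.card_lt_of_surjective_not_injective _ phi_surjective hnotinj
  simpa [kc, Nat.card_eq_fintype_card] using this

lemma spanned_iff_reach {A : Finset E} {f : E} {a b : V} (hab : ends f = s(a, b)) :
    spanned ends A f ↔ (edgeGraph ends A).Reachable a b := by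
  constructor
  · intro hs
    by_contra hr
    exact absurd hs (Nat.ne_of_lt (kc_insert_lt_of_not_reach hab hr))
  · exact kc_insert_of_reach hab

lemma spanned_mono {A B : Finset E} {f : E} (h : A ⊆ B) (hs : spanned ends A f) :
    spanned ends B f := by
  obtain ⟨a, b, hab⟩ := sym2_exists (ends f)
  exact (spanned_iff_reach hab).mpr
    (((spanned_iff_reach hab).mp hs).mono (edgeGraph_mono h))

lemma spanned_of_mem {A : Finset E} {f : E} (h : f ∈ A) : spanned ends A f := by
  unfold spanned
  rw [Finset.insert_eq_self.mpr h]

lemma kc_union_spanned {A S : Finset E} (h : ∀ f ∈ S, spanned ends A f) :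
    kc ends (A ∪ S) = kc ends A := by
  induction S using Finset.induction with
  | empty => rw [Finset.union_empty]
  | @insert x S hx ih =>
    rw [Finset.union_insert]
    have h1 : spanned ends (A ∪ S) x :=
      spanned_mono Finset.subset_union_left (h x (Finset.mem_insert_self x S))
    rw [h1, ih (fun f hf => h f (Finset.mem_insert_of_mem hf))]

lemma card_add_kc_ge (A : Finset E) : Fintype.card V ≤ A.card + kc ends A := by
  induction A using Finset.induction with
  | empty => simp [kc_empty]
  | @insert x A hx ih =>
    have := kc_le_insert (ends := ends) A x
    rw [Finset.card_insert_of_notMem hx]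
    omega
end Part2

section Part3
variable {V E : Type} [Fintype V] [Fintype E] [DecidableEq E] {ends : E → Sym2 V}

def Forest (ends : E → Sym2 V) (A : Finset E) : Prop :=
  A.card + kc ends A = Fintype.card V

lemma forest_empty : Forest ends (∅ : Finset E) := by simp [Forest, kc_empty]

lemma kc_erase {B : Finset E} {e : E} (hB : Forest ends B) (he : e ∈ B) :
    kc ends (B.erase e) = kc ends B + 1 := by
  have h1 : Fintype.card V ≤ (B.erase e).card + kc ends (B.erase e) := card_add_kc_ge _
  have h2 : kc ends (insert e (B.erase e)) = kc ends B := by rw [Finset.insert_erase he]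
  have h3 := kc_le_insert (ends := ends) (B.erase e) e
  have hcard : (B.erase e).card + 1 = B.card := Finset.card_erase_add_one he
  unfold Forest at hB
  omega

lemma forest_erase {B : Finset E} {e : E} (hB : Forest ends B) (he : e ∈ B) :
    Forest ends (B.erase e) := by
  have := kc_erase hB he
  have hcard : (B.erase e).card + 1 = B.card := Finset.card_erase_add_one he
  unfold Forest at *
  omega

lemma forest_sdiff {B S : Finset E} (hB : Forest ends B) (hS : S ⊆ B) :
    Forest ends (B \ S) ∧ kc ends (B \ S) = kc ends B + S.card := by
  induction S using Finset.induction with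
  | empty => simpa using hB
  | @insert x S hx ih =>
    have hS' : S ⊆ B := (Finset.subset_insert x S).trans hS
    obtain ⟨hf, hk⟩ := ih hS'
    have hxB : x ∈ B \ S :=
      Finset.mem_sdiff.mpr ⟨hS (Finset.mem_insert_self x S), hx⟩
    have heq : B \ insert x S = (B \ S).erase x := by
      ext y; simp [Finset.mem_sdiff, Finset.mem_erase, Finset.mem_insert]; tauto
    rw [heq, Finset.card_insert_of_notMem hx]
    exact ⟨forest_erase hf hxB, by rw [kc_erase hf hxB, hk]; omega⟩

lemma forest_subset {A B : Finset E} (hB : Forest ends B) (h : A ⊆ B) : Forest ends A := by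
  have := (forest_sdiff hB (Finset.sdiff_subset (t := A))).1
  rwa [Finset.sdiff_sdiff_eq_self h] at this

lemma kc_insert_of_not_spanned {A : Finset E} {f : E} (h : ¬ spanned ends A f) :
    kc ends (insert f A) + 1 = kc ends A := by
  have h1 : kc ends (insert f A) ≤ kc ends A := kc_mono (Finset.subset_insert f A)
  have h2 := kc_le_insert (ends := ends) A f
  unfold spanned at h
  omega

lemma forest_insert {A : Finset E} {f : E} (hA : Forest ends A) (h : ¬ spanned ends A f) :
    Forest ends (insert f A) := by
  have hfA : f ∉ A := fun hf => h (spanned_of_mem hf)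
  have := kc_insert_of_not_spanned h
  unfold Forest at *
  rw [Finset.card_insert_of_notMem hfA]
  omega

lemma augment {I B : Finset E} (hI : Forest ends I) (h : kc ends B < kc ends I) :
    ∃ e ∈ B, ¬ spanned ends I e := by
  by_contra hc
  push_neg at hc
  -- every edge of B is spanned by I, so components of B map onto components of I
  have hadj : ∀ u v, (edgeGraph ends B).Adj u v → (edgeGraph ends I).Reachable u v := by
    rintro u v ⟨hne, e, he, hs⟩
    obtain ⟨a, b, hab⟩ := sym2_exists (ends e)
    have hr : (edgeGraph ends I).Reachable a b := (spanned_iff_reach hab).mp (hc e he)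
    rw [hab] at hs
    rcases Sym2.eq_iff.mp hs with ⟨rfl, rfl⟩ | ⟨rfl, rfl⟩
    · exact hr
    · exact hr.symm
  let ρ : (edgeGraph ends B).ConnectedComponent → (edgeGraph ends I).ConnectedComponent :=
    Quot.lift (fun v => (edgeGraph ends I).connectedComponentMk v)
      (fun u v (hr : (edgeGraph ends B).Reachable u v) =>
        SimpleGraph.ConnectedComponent.sound (reach_of_adj_imp hadj hr))
  have hsurj : Function.Surjective ρ := fun C =>
    C.ind (fun v => ⟨(edgeGraph ends B).connectedComponentMk v, rfl⟩)
  have : kc ends I ≤ kc ends B := Nat.card_le_card_of_surjective ρ hsurj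
  omega
end Part3

section Part4
variable {V E : Type} [Fintype V] [Fintype E] [DecidableEq E] {ends : E → Sym2 V}

lemma isf_forest {B : Finset E} (h : IsSpanningForest ends B) : Forest ends B := h.1

lemma isf_card {B : Finset E} (h : IsSpanningForest ends B) :
    B.card + kc ends (univ : Finset E) = Fintype.card V := by
  have := h.1; rw [h.2] at this; exact this

/-- S1: swapping in an edge spanned by `B \ e` destroys the basis property. -/
lemma not_isf_swap {B : Finset E} {e f : E} (hB : IsSpanningForest ends B)
    (he : e ∈ B) (hsp : spanned ends (B.erase e) f) :
    ¬ IsSpanningForest ends (swapEdge B e f) := by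
  intro hc
  have h1 : kc ends (swapEdge B e f) = kc ends (B.erase e) := hsp
  have h2 : kc ends (B.erase e) = kc ends B + 1 := kc_erase hB.1 he
  have h3 : kc ends B = kc ends (univ : Finset E) := hB.2
  have h4 := hc.2
  omega

lemma exists_basis_between {B : Finset E} (hB : IsSpanningForest ends B) :
    ∀ (k : ℕ) (I : Finset E) (x : E), Forest ends I → I ⊆ insert x B →
      kc ends I ≤ kc ends (univ : Finset E) + k →
      ∃ B', IsSpanningForest ends B' ∧ I ⊆ B' ∧ B' ⊆ insert x B := by
  intro k
  induction k with
  | zero =>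
    intro I x hI hsub hk
    have h2 : kc ends (univ : Finset E) ≤ kc ends I := kc_mono (Finset.subset_univ I)
    exact ⟨I, ⟨hI, le_antisymm hk h2⟩, Finset.Subset.refl I, hsub⟩
  | succ k ih =>
    intro I x hI hsub hk
    by_cases hkc : kc ends I ≤ kc ends (univ : Finset E) + k
    · exact ih I x hI hsub hkc
    · have hlt : kc ends B < kc ends I := by
        have := hB.2; omega
      obtain ⟨e, heB, hns⟩ := augment hI hlt
      have heI : e ∉ I := fun h => hns (spanned_of_mem h)
      have hI' : Forest ends (insert e I) := forest_insert hI hns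
      have hk' : kc ends (insert e I) ≤ kc ends (univ : Finset E) + k := by
        have := kc_insert_of_not_spanned hns; omega
      exact (ih (insert e I) x hI'
        (Finset.insert_subset (Finset.mem_insert_of_mem heB) hsub) hk').imp
        (fun B' ⟨h1, h2, h3⟩ => ⟨h1, (Finset.subset_insert e I).trans h2, h3⟩)

/-- S2: strong exchange. -/
lemma strong_exchange {B P : Finset E} {x : E} (hB : IsSpanningForest ends B)
    (hx : x ∉ B) (hns : ¬ spanned ends (B ∩ P) x) :
    ∃ y ∈ B, y ∉ P ∧ IsSpanningForest ends (swapEdge B y x) := by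
  have hBP : Forest ends (B ∩ P) := forest_subset hB.1 Finset.inter_subset_left
  have hI : Forest ends (insert x (B ∩ P)) := forest_insert hBP hns
  obtain ⟨B', hB', hIB', hB'sub⟩ := exists_basis_between hB (kc ends (insert x (B ∩ P)))
    (insert x (B ∩ P)) x hI
    (Finset.insert_subset_insert x Finset.inter_subset_left) (Nat.le_add_left _ _)
  have hxB' : x ∈ B' := hIB' (Finset.mem_insert_self _ _)
  have hcards : B'.card = B.card := by
    have h1 := isf_card hB'; have h2 := isf_card hB; omega
  have hnsub : ¬ B ⊆ B' := by
    intro hsub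
    have : insert x B ⊆ B' := Finset.insert_subset hxB' hsub
    have hc := Finset.card_le_card this
    rw [Finset.card_insert_of_notMem hx] at hc
    omega
  obtain ⟨y, hyB, hyB'⟩ := Finset.not_subset.mp hnsub
  have hBeq : B' = swapEdge B y x := by
    apply Finset.eq_of_subset_of_card_le
    · intro z hz
      rcases Finset.mem_insert.mp (hB'sub hz) with rfl | hzB
      · exact Finset.mem_insert_self _ _
      · exact Finset.mem_insert_of_mem (Finset.mem_erase.mpr
          ⟨fun h => hyB' (h ▸ hz), hzB⟩)
    · rw [swapEdge, Finset.card_insert_of_notMem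
        (fun h => hx (Finset.erase_subset _ _ h)), Finset.card_erase_of_mem hyB]
      have hBpos : 0 < B.card := Finset.card_pos.mpr ⟨y, hyB⟩
      omega
  refine ⟨y, hyB, fun hyP => hyB' (hIB' (Finset.mem_insert_of_mem (Finset.mem_inter.mpr ⟨hyB, hyP⟩))), ?_⟩
  rwa [hBeq] at hB'
end Part4

section Part5
variable {V E : Type} [Fintype V] [Fintype E] [DecidableEq E] [LinearOrder E]

/-- The processing order: elements of `A` in increasing order, then the others
in decreasing order. -/
def prec (A : Finset E) (y x : E) : Prop :=
  (y ∈ A ∧ x ∈ A ∧ y < x) ∨ (y ∈ A ∧ x ∉ A) ∨ (y ∉ A ∧ x ∉ A ∧ x < y)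

lemma prec_irrefl {A : Finset E} {x : E} : ¬ prec A x x := by
  unfold prec; intro h; rcases h with ⟨_, _, h⟩ | ⟨h1, h2⟩ | ⟨_, _, h⟩
  · exact lt_irrefl _ h
  · exact h2 h1
  · exact lt_irrefl _ h

lemma prec_trans {A : Finset E} {x y z : E} (h1 : prec A x y) (h2 : prec A y z) :
    prec A x z := by
  unfold prec at *
  rcases h1 with ⟨a1, a2, a3⟩ | ⟨a1, a2⟩ | ⟨a1, a2, a3⟩ <;>
    rcases h2 with ⟨b1, b2, b3⟩ | ⟨b1, b2⟩ | ⟨b1, b2, b3⟩ <;>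
    first
      | (exact Or.inl ⟨by assumption, by assumption, lt_trans a3 b3⟩)
      | (exact Or.inl ⟨a1, b2, a3⟩)
      | (exact Or.inr (Or.inl ⟨a1, b2⟩))
      | (exact Or.inr (Or.inr ⟨a1, b2, lt_trans b3 a3⟩))
      | (exact absurd a2 (fun h => h b1))
      | (exact absurd b1 a2)
      | (exact absurd a1 b1)
      | (exact absurd b1 a1)
      | (exact absurd a2 b1)
      | (exact absurd a1 b2)

lemma prec_total {A : Finset E} {x y : E} (h : x ≠ y) : prec A x y ∨ prec A y x := by
  unfold prec
  by_cases hx : x ∈ A <;> by_cases hy : y ∈ A <;> rcases lt_or_gt_of_ne h with hlt | hlt <;> tauto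

noncomputable def predS (A : Finset E) (x : E) : Finset E :=
  univ.filter (fun y => prec A y x)

lemma mem_predS {A : Finset E} {x y : E} : y ∈ predS A x ↔ prec A y x := by
  simp [predS]

lemma predS_ssubset {A : Finset E} {x y : E} (h : prec A y x) :
    predS A y ⊂ predS A x := by
  constructor
  · intro z hz; exact mem_predS.mpr (prec_trans (mem_predS.mp hz) h)
  · intro hsub
    exact prec_irrefl (mem_predS.mp (hsub (mem_predS.mpr h)))

variable (ends : E → Sym2 V)

noncomputable def chosen (A : Finset E) (x : E) : Prop :=
  ¬ spanned ends (((predS A x).attach.filter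
      (fun y => chosen A y.1)).image Subtype.val) x
termination_by (predS A x).card
decreasing_by
  all_goals
  have h : ∀ (y : {z // z ∈ predS A x}), (predS A ↑y).card < (predS A x).card :=
    fun y => Finset.card_lt_card (predS_ssubset (mem_predS.mp y.2))
  exact h _

noncomputable def greedy (A : Finset E) : Finset E := univ.filter (chosen ends A)

lemma chosen_iff (A : Finset E) (x : E) :
    chosen ends A x ↔ ¬ spanned ends (greedy ends A ∩ predS A x) x := by
  rw [chosen]
  have : (((predS A x).attach.filter (fun y => chosen ends A y.1)).image Subtype.val)
      = greedy ends A ∩ predS A x := by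
    ext z
    constructor
    · intro hz
      obtain ⟨y, hy, rfl⟩ := Finset.mem_image.mp hz
      have hc := (Finset.mem_filter.mp hy).2
      exact Finset.mem_inter.mpr
        ⟨Finset.mem_filter.mpr ⟨Finset.mem_univ _, hc⟩, y.2⟩
    · intro hz
      obtain ⟨hg, hp⟩ := Finset.mem_inter.mp hz
      have hc := (Finset.mem_filter.mp hg).2
      exact Finset.mem_image.mpr
        ⟨⟨z, hp⟩, Finset.mem_filter.mpr ⟨Finset.mem_attach _ _, hc⟩, rfl⟩
  rw [this]

end Part5

section Part6
variable {V E : Type} [Fintype V] [Fintype E] [DecidableEq E] [LinearOrder E]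
variable {ends : E → Sym2 V}

lemma mem_greedy {A : Finset E} {x : E} : x ∈ greedy ends A ↔ chosen ends A x := by
  simp [greedy]

lemma exists_prec_max {A D : Finset E} (hD : D.Nonempty) :
    ∃ x ∈ D, ∀ y ∈ D, y ≠ x → prec A y x := by
  obtain ⟨x, hxD, hmax⟩ := Finset.exists_max_image D (fun y => (predS A y).card) hD
  refine ⟨x, hxD, fun y hy hne => ?_⟩
  rcases prec_total (A := A) hne with h | h
  · exact h
  · have := Finset.card_lt_card (predS_ssubset h)
    have := hmax y hy
    omega

lemma forest_greedy_inter (ends : E → Sym2 V) (A : Finset E) :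
    ∀ (n : ℕ) (D : Finset E), D.card ≤ n → (∀ x ∈ D, ∀ y, prec A y x → y ∈ D) →
      Forest ends (greedy ends A ∩ D) := by
  intro n
  induction n with
  | zero =>
    intro D hcard _
    rw [Finset.card_eq_zero.mp (Nat.le_zero.mp hcard), Finset.inter_empty]
    exact forest_empty
  | succ n ih =>
    intro D hcard hDC
    rcases Finset.eq_empty_or_nonempty D with rfl | hne
    · rw [Finset.inter_empty]; exact forest_empty
    obtain ⟨x, hxD, hmax⟩ := exists_prec_max (A := A) hne
    set D' := D.erase x with hD'
    have hDC' : ∀ z ∈ D', ∀ y, prec A y z → y ∈ D' := by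
      intro z hz y hy
      have hzD : z ∈ D := Finset.mem_of_mem_erase hz
      have hyD : y ∈ D := hDC z hzD y hy
      refine Finset.mem_erase.mpr ⟨?_, hyD⟩
      rintro rfl
      exact prec_irrefl (prec_trans hy (hmax z hzD (Finset.ne_of_mem_erase hz)))
    have hcard' : D'.card ≤ n := by
      have h1 : D'.card = D.card - 1 := by rw [hD']; exact Finset.card_erase_of_mem hxD
      have hpos : 0 < D.card := Finset.card_pos.mpr ⟨x, hxD⟩
      omega
    have IH := ih D' hcard' hDC'
    have hDeq : D = insert x D' := (Finset.insert_erase hxD).symm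
    by_cases hx : x ∈ greedy ends A
    · have hsub : greedy ends A ∩ D' ⊆ greedy ends A ∩ predS A x := by
        intro y hy
        obtain ⟨h1, h2⟩ := Finset.mem_inter.mp hy
        exact Finset.mem_inter.mpr ⟨h1, mem_predS.mpr
          (hmax y (Finset.mem_of_mem_erase h2) (Finset.ne_of_mem_erase h2))⟩
      have hns : ¬ spanned ends (greedy ends A ∩ predS A x) x :=
        (chosen_iff ends A x).mp (mem_greedy.mp hx)
      have hns' : ¬ spanned ends (greedy ends A ∩ D') x :=
        fun hs => hns (spanned_mono hsub hs)
      have : greedy ends A ∩ D = insert x (greedy ends A ∩ D') := by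
        rw [hDeq, Finset.inter_insert_of_mem hx]
      rw [this]
      exact forest_insert IH hns'
    · have : greedy ends A ∩ D = greedy ends A ∩ D' := by
        rw [hDeq, Finset.inter_insert_of_notMem hx]
      rw [this]
      exact IH

lemma greedy_isf (ends : E → Sym2 V) (A : Finset E) : IsSpanningForest ends (greedy ends A) := by
  have hforest : Forest ends (greedy ends A) := by
    have := forest_greedy_inter ends A (univ : Finset E).card univ le_rfl
      (fun x _ y _ => Finset.mem_univ y)
    rwa [Finset.inter_univ] at this
  have hsp : ∀ f ∈ (univ : Finset E), spanned ends (greedy ends A) f := by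
    intro f _
    by_cases hf : f ∈ greedy ends A
    · exact spanned_of_mem hf
    · have h1 : ¬ ¬ spanned ends (greedy ends A ∩ predS A f) f :=
        fun h => hf (mem_greedy.mpr ((chosen_iff ends A f).mpr h))
      exact spanned_mono Finset.inter_subset_left (not_not.mp h1)
  have : kc ends (greedy ends A ∪ univ) = kc ends (greedy ends A) := kc_union_spanned hsp
  have huniv : greedy ends A ∪ univ = univ := by simp
  rw [huniv] at this
  exact ⟨hforest, this.symm⟩

lemma greedy_swap_not_isf {A : Finset E} {e f : E} (hf : f ∉ greedy ends A)
    (he : e ∈ greedy ends A) (hep : e ∉ predS A f) :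
    ¬ IsSpanningForest ends (swapEdge (greedy ends A) e f) := by
  have hsp : spanned ends (greedy ends A ∩ predS A f) f :=
    not_not.mp (fun h => hf (mem_greedy.mpr ((chosen_iff ends A f).mpr h)))
  have hsub : greedy ends A ∩ predS A f ⊆ (greedy ends A).erase e := by
    intro y hy
    obtain ⟨h1, h2⟩ := Finset.mem_inter.mp hy
    exact Finset.mem_erase.mpr ⟨fun h => hep (h ▸ h2), h1⟩
  exact not_isf_swap (greedy_isf ends A) he (spanned_mono hsub hsp)

lemma greedy_intAct {A : Finset E} {x : E} (hx : x ∈ greedy ends A) (hxA : x ∉ A) :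
    InternallyActive ends (greedy ends A) x := by
  refine ⟨hx, ?_⟩
  rintro ⟨f, hfg, hxf, hisf⟩
  refine greedy_swap_not_isf hfg hx ?_ hisf
  intro hp
  rcases mem_predS.mp hp with ⟨h1, _, _⟩ | ⟨h1, _⟩ | ⟨_, _, h3⟩
  · exact hxA h1
  · exact hxA h1
  · exact lt_asymm hxf h3

lemma greedy_extAct {A : Finset E} {x : E} (hxA : x ∈ A) (hxg : x ∉ greedy ends A) :
    ExternallyActive ends (greedy ends A) x := by
  refine ⟨hxg, ?_⟩
  rintro ⟨e, heg, hxe, hisf⟩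
  refine greedy_swap_not_isf hxg heg ?_ hisf
  intro hp
  rcases mem_predS.mp hp with ⟨_, _, h3⟩ | ⟨_, h2⟩ | ⟨_, h2, _⟩
  · exact lt_asymm hxe h3
  · exact h2 hxA
  · exact h2 hxA

lemma greedy_unique {A B : Finset E} (hB : IsSpanningForest ends B)
    (hIA : ∀ e ∈ B, e ∉ A → InternallyActive ends B e)
    (hEA : ∀ f ∈ A, f ∉ B → ExternallyActive ends B f) :
    greedy ends A = B := by
  have key : ∀ n x, (predS A x).card ≤ n → (chosen ends A x ↔ x ∈ B) := by
    intro n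
    induction n using Nat.strong_induction_on with
    | _ n ih =>
      intro x hxn
      have hfilter : greedy ends A ∩ predS A x = B ∩ predS A x := by
        ext y
        simp only [Finset.mem_inter, mem_greedy]
        constructor
        · rintro ⟨h1, h2⟩
          have hlt := Finset.card_lt_card (predS_ssubset (mem_predS.mp h2))
          exact ⟨(ih _ (lt_of_lt_of_le hlt hxn) y le_rfl).mp h1, h2⟩
        · rintro ⟨h1, h2⟩
          have hlt := Finset.card_lt_card (predS_ssubset (mem_predS.mp h2))
          exact ⟨(ih _ (lt_of_lt_of_le hlt hxn) y le_rfl).mpr h1, h2⟩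
      rw [chosen_iff, hfilter]
      by_cases hxB : x ∈ B
      · simp only [hxB, iff_true]
        intro hs
        have hxp : x ∉ B ∩ predS A x :=
          fun h => prec_irrefl (mem_predS.mp (Finset.mem_inter.mp h).2)
        have hsubB : insert x (B ∩ predS A x) ⊆ B :=
          Finset.insert_subset hxB Finset.inter_subset_left
        have h1 : Forest ends (insert x (B ∩ predS A x)) := forest_subset hB.1 hsubB
        have h2 : Forest ends (B ∩ predS A x) := forest_subset hB.1 Finset.inter_subset_left
        unfold Forest at h1 h2
        rw [Finset.card_insert_of_notMem hxp] at h1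
        have hkc : kc ends (insert x (B ∩ predS A x)) = kc ends (B ∩ predS A x) := hs
        omega
      · simp only [hxB, iff_false, not_not]
        by_contra hns
        obtain ⟨y, hyB, hyP, hswap⟩ := strong_exchange (P := predS A x) hB hxB hns
        have hyx : y ≠ x := fun h => hxB (h ▸ hyB)
        by_cases hxA : x ∈ A
        · have hEAx := hEA x hxA hxB
          have hylt : y < x := by
            rcases lt_or_gt_of_ne hyx with h | h
            · exact h
            · exact absurd ⟨y, hyB, h, hswap⟩ hEAx.2
          have hyA : y ∉ A := fun hyA => hyP (mem_predS.mpr (Or.inl ⟨hyA, hxA, hylt⟩))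
          exact (hIA y hyB hyA).2 ⟨x, hxB, hylt, hswap⟩
        · have hyA : y ∉ A := fun hyA => hyP (mem_predS.mpr (Or.inr (Or.inl ⟨hyA, hxA⟩)))
          have hylt : y < x := by
            rcases lt_or_gt_of_ne hyx with h | h
            · exact h
            · exact absurd (mem_predS.mpr (Or.inr (Or.inr ⟨hyA, hxA, h⟩))) hyP
          exact (hIA y hyB hyA).2 ⟨x, hxB, hylt, hswap⟩
  ext x
  rw [mem_greedy]
  exact key _ x le_rfl

lemma greedy_eq_iff {A B : Finset E} :
    greedy ends A = B ↔ (IsSpanningForest ends B ∧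
      (∀ e ∈ B, e ∉ A → InternallyActive ends B e) ∧
      (∀ f ∈ A, f ∉ B → ExternallyActive ends B f)) := by
  constructor
  · rintro rfl
    exact ⟨greedy_isf ends A, fun e he heA => greedy_intAct he heA,
      fun f hfA hfg => greedy_extAct hfA hfg⟩
  · rintro ⟨h1, h2, h3⟩
    exact greedy_unique h1 h2 h3
end Part6

section Part7
variable {V E : Type} [Fintype V] [Fintype E] [DecidableEq E] {ends : E → Sym2 V} {n : ℕ}

lemma eq_of_reach {α : Type*} {G : SimpleGraph V} {c : V → α}
    (h : ∀ u v, G.Adj u v → c u = c v) {u v : V} (hr : G.Reachable u v) : c u = c v := by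
  obtain ⟨p⟩ := hr
  induction p with
  | nil => rfl
  | cons ha _ ih => exact (h _ _ ha).trans ih

noncomputable def badSet (ends : E → Sym2 V) (n : ℕ) (c : V → Fin n) : Finset E :=
  univ.filter (fun e => ∃ a b, ends e = s(a, b) ∧ c a = c b)

lemma mem_badSet {c : V → Fin n} {e : E} :
    e ∈ badSet ends n c ↔ ∃ a b, ends e = s(a, b) ∧ c a = c b := by simp [badSet]

lemma count_mono (A : Finset E) :
    Nat.card {c : V → Fin n // A ⊆ badSet ends n c} = n ^ kc ends A := by
  have hadj : ∀ (c : {c : V → Fin n // A ⊆ badSet ends n c}) (u v : V),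
      (edgeGraph ends A).Adj u v → c.1 u = c.1 v := by
    rintro ⟨c, hc⟩ u v ⟨hne, e, he, hs⟩
    obtain ⟨a, b, hab, hcc⟩ := mem_badSet.mp (hc he)
    rw [hab] at hs
    rcases Sym2.eq_iff.mp hs with ⟨rfl, rfl⟩ | ⟨rfl, rfl⟩
    · exact hcc
    · exact hcc.symm
  let F : {c : V → Fin n // A ⊆ badSet ends n c} →
      ((edgeGraph ends A).ConnectedComponent → Fin n) :=
    fun c => Quot.lift c.1 (fun u v hr => eq_of_reach (hadj c) hr)
  have hbij : Function.Bijective F := by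
    constructor
    · rintro ⟨c, hc⟩ ⟨d, hd⟩ h
      apply Subtype.ext
      funext v
      exact congrFun h ((edgeGraph ends A).connectedComponentMk v)
    · intro g
      refine ⟨⟨fun v => g ((edgeGraph ends A).connectedComponentMk v), ?_⟩, ?_⟩
      · intro e he
        rw [mem_badSet]
        obtain ⟨a, b, hab⟩ := sym2_exists (ends e)
        refine ⟨a, b, hab, ?_⟩
        by_cases hne : a = b
        · rw [hne]
        · exact congrArg g (SimpleGraph.ConnectedComponent.sound
            (SimpleGraph.Adj.reachable ⟨hne, e, he, hab⟩))
      · funext C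
        exact C.ind (fun v => rfl)
  calc Nat.card {c : V → Fin n // A ⊆ badSet ends n c}
      = Nat.card ((edgeGraph ends A).ConnectedComponent → Fin n) :=
        Nat.card_eq_of_bijective F hbij
    _ = Nat.card (Fin n) ^ Nat.card (edgeGraph ends A).ConnectedComponent := Nat.card_fun
    _ = n ^ kc ends A := by rw [Nat.card_eq_fintype_card, Fintype.card_fin]; rfl

lemma chromCount_eq :
    chromCount ends n = (univ.filter (fun c : V → Fin n => badSet ends n c = ∅)).card := by
  rw [chromCount]
  have hiff : ∀ c : V → Fin n,
      (∀ e : E, ∀ a b : V, ends e = s(a, b) → c a ≠ c b) ↔ badSet ends n c = ∅ := by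
    intro c
    rw [Finset.eq_empty_iff_forall_notMem]
    constructor
    · intro h e hmem
      obtain ⟨a, b, hab, hcc⟩ := mem_badSet.mp hmem
      exact h e a b hab hcc
    · intro h e a b hab hcc
      exact h e (mem_badSet.mpr ⟨a, b, hab, hcc⟩)
  rw [Nat.card_congr (Equiv.subtypeEquivRight hiff), Nat.card_eq_fintype_card,
    Fintype.card_subtype]

lemma sum_powerset_neg_one (s : Finset E) :
    ∑ t ∈ s.powerset, (-1 : ℤ) ^ t.card = 0 ^ s.card := by
  calc ∑ t ∈ s.powerset, (-1 : ℤ) ^ t.card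
      = ∑ t ∈ s.powerset, (∏ _i ∈ t, (-1 : ℤ)) * ∏ _i ∈ s \ t, (1 : ℤ) := by
        apply Finset.sum_congr rfl; intro t _; simp
    _ = ∏ _i ∈ s, ((-1 : ℤ) + 1) := (Finset.prod_add _ _ s).symm
    _ = 0 ^ s.card := by simp

lemma zero_pow_card (s : Finset E) : (0 : ℤ) ^ s.card = if s = ∅ then 1 else 0 := by
  rcases Finset.eq_empty_or_nonempty s with rfl | h
  · simp
  · rw [if_neg (Finset.nonempty_iff_ne_empty.mp h), zero_pow]
    exact Finset.card_ne_zero_of_mem h.choose_spec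

lemma whitney (ends : E → Sym2 V) (n : ℕ) :
    (chromCount ends n : ℤ) =
      ∑ A ∈ (univ : Finset E).powerset, (-1) ^ A.card * (n : ℤ) ^ kc ends A := by
  have hcount : ∀ A : Finset E, ((n : ℤ)) ^ kc ends A =
      ((univ.filter (fun c : V → Fin n => A ⊆ badSet ends n c)).card : ℤ) := by
    intro A
    have h1 : (univ.filter (fun c : V → Fin n => A ⊆ badSet ends n c)).card = n ^ kc ends A := by
      rw [← Fintype.card_subtype, ← Nat.card_eq_fintype_card]
      exact count_mono A
    rw [h1]
    push_cast
    rfl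
  symm
  calc ∑ A ∈ (univ : Finset E).powerset, (-1) ^ A.card * (n : ℤ) ^ kc ends A
      = ∑ A ∈ (univ : Finset E).powerset, ∑ c ∈ (univ : Finset (V → Fin n)),
          (if A ⊆ badSet ends n c then (-1 : ℤ) ^ A.card else 0) := by
        apply Finset.sum_congr rfl
        intro A _
        rw [hcount A, ← Finset.sum_boole, Finset.mul_sum]
        apply Finset.sum_congr rfl
        intro c _
        by_cases h : A ⊆ badSet ends n c <;> simp [h]
    _ = ∑ c ∈ (univ : Finset (V → Fin n)), ∑ A ∈ (univ : Finset E).powerset,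
          (if A ⊆ badSet ends n c then (-1 : ℤ) ^ A.card else 0) := Finset.sum_comm
    _ = ∑ c ∈ (univ : Finset (V → Fin n)), (if badSet ends n c = ∅ then (1 : ℤ) else 0) := by
        apply Finset.sum_congr rfl
        intro c _
        have hpow : (univ : Finset E).powerset.filter (fun A => A ⊆ badSet ends n c)
            = (badSet ends n c).powerset := by
          ext t
          simp [Finset.mem_powerset]
        rw [← Finset.sum_filter, hpow, sum_powerset_neg_one, zero_pow_card]
    _ = ((univ.filter (fun c : V → Fin n => badSet ends n c = ∅)).card : ℤ) := by
        rw [Finset.sum_boole]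
    _ = (chromCount ends n : ℤ) := by rw [chromCount_eq]
end Part7

section Part8
variable {V E : Type} [Fintype V] [Fintype E] [DecidableEq E] [LinearOrder E]
variable {ends : E → Sym2 V}

lemma mem_intAct {B e : _} : e ∈ intAct ends B ↔ InternallyActive ends B e := by simp [intAct]
lemma mem_extAct {B f : _} : f ∈ extAct ends B ↔ ExternallyActive ends B f := by simp [extAct]

lemma intAct_subset {B : Finset E} : intAct ends B ⊆ B :=
  fun e he => (mem_intAct.mp he).1

lemma extAct_not_mem {B : Finset E} {x : E} (h : x ∈ extAct ends B) : x ∉ B :=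
  (mem_extAct.mp h).1

variable {B C : Finset E} (hB : IsSpanningForest ends B)
  (hC : C ⊆ intAct ends B ∪ extAct ends B)

/-- Membership facts about `A = (B \ IA) ∪ C`. -/
lemma interval_int (hC : C ⊆ intAct ends B ∪ extAct ends B) :
    ∀ e ∈ B, e ∉ (B \ intAct ends B) ∪ C → InternallyActive ends B e := by
  intro e heB heA
  have h1 : e ∉ B \ intAct ends B := fun h => heA (Finset.mem_union_left _ h)
  have h2 : e ∈ intAct ends B := by
    by_contra h
    exact h1 (Finset.mem_sdiff.mpr ⟨heB, h⟩)
  exact mem_intAct.mp h2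

lemma interval_ext (hC : C ⊆ intAct ends B ∪ extAct ends B) :
    ∀ f ∈ (B \ intAct ends B) ∪ C, f ∉ B → ExternallyActive ends B f := by
  intro f hfA hfB
  have hfC : f ∈ C := by
    rcases Finset.mem_union.mp hfA with h | h
    · exact absurd (Finset.mem_sdiff.mp h).1 hfB
    · exact h
  rcases Finset.mem_union.mp (hC hfC) with h | h
  · exact absurd (intAct_subset h) hfB
  · exact mem_extAct.mp h

lemma interval_greedy (hB : IsSpanningForest ends B)
    (hC : C ⊆ intAct ends B ∪ extAct ends B) :
    greedy ends ((B \ intAct ends B) ∪ C) = B :=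
  greedy_eq_iff.mpr ⟨hB, interval_int hC, interval_ext hC⟩

lemma spanned_ext_edge {A f : _} (hB : IsSpanningForest ends B)
    (hInt : ∀ e ∈ B, e ∉ A → InternallyActive ends B e)
    (hfB : f ∉ B) (hEAf : ExternallyActive ends B f) :
    spanned ends (A ∩ B) f := by
  by_contra hns
  rw [Finset.inter_comm] at hns
  obtain ⟨y, hyB, hyA, hswap⟩ := strong_exchange hB hfB hns
  have hyf : y ≠ f := fun h => hfB (h ▸ hyB)
  have hylt : y < f := by
    rcases lt_or_gt_of_ne hyf with h | h
    · exact h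
    · exact absurd ⟨y, hyB, h, hswap⟩ hEAf.2
  exact (hInt y hyB hyA).2 ⟨f, hfB, hylt, hswap⟩

lemma interval_kc (hB : IsSpanningForest ends B)
    (hC : C ⊆ intAct ends B ∪ extAct ends B) :
    kc ends ((B \ intAct ends B) ∪ C) =
      kc ends (univ : Finset E) + ((intAct ends B) \ C).card := by
  set IA := intAct ends B with hIA
  set A := (B \ IA) ∪ C with hA
  have hABeq : A ∩ B = B \ (IA \ C) := by
    ext z
    simp only [hA, Finset.mem_inter, Finset.mem_union, Finset.mem_sdiff]
    tauto
  have hspan : ∀ f ∈ A \ B, spanned ends (A ∩ B) f := by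
    intro f hf
    obtain ⟨hfA, hfB⟩ := Finset.mem_sdiff.mp hf
    exact spanned_ext_edge hB (interval_int hC) hfB (interval_ext hC f hfA hfB)
  have h1 : kc ends A = kc ends (A ∩ B) := by
    have hAeq : A = (A ∩ B) ∪ (A \ B) := by
      ext z
      simp only [Finset.mem_union, Finset.mem_inter, Finset.mem_sdiff]
      tauto
    conv_lhs => rw [hAeq]
    exact kc_union_spanned hspan
  have hsub : IA \ C ⊆ B := Finset.sdiff_subset.trans intAct_subset
  have h2 := (forest_sdiff hB.1 hsub).2
  rw [h1, hABeq, h2, hB.2]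

lemma interval_disjoint (hC : C ⊆ intAct ends B ∪ extAct ends B) :
    Disjoint (B \ intAct ends B) C := by
  rw [Finset.disjoint_left]
  intro z hz hzC
  obtain ⟨hzB, hzIA⟩ := Finset.mem_sdiff.mp hz
  rcases Finset.mem_union.mp (hC hzC) with h | h
  · exact hzIA h
  · exact extAct_not_mem h hzB

lemma fiber_sum (n : ℕ) (hB : IsSpanningForest ends B) :
    ∑ A ∈ univ.powerset.filter (fun A => greedy ends A = B),
        (-1 : ℤ) ^ A.card * (n : ℤ) ^ kc ends A
      = (-1) ^ (B \ intAct ends B).card * (n : ℤ) ^ kc ends (univ : Finset E) *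
          (((n : ℤ) - 1) ^ (intAct ends B).card * 0 ^ (extAct ends B).card) := by
  set IA := intAct ends B with hIAdef
  set XA := extAct ends B with hXAdef
  set s := IA ∪ XA with hs
  have hIAs : IA ⊆ s := Finset.subset_union_left
  -- reindex the fiber by subsets of IA ∪ XA
  have step1 : ∑ A ∈ univ.powerset.filter (fun A => greedy ends A = B),
      (-1 : ℤ) ^ A.card * (n : ℤ) ^ kc ends A
      = ∑ C ∈ s.powerset, (-1 : ℤ) ^ ((B \ IA) ∪ C).card * (n : ℤ) ^ kc ends ((B \ IA) ∪ C) := by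
    apply Finset.sum_nbij' (i := fun A => A \ (B \ IA)) (j := fun C => (B \ IA) ∪ C)
    · -- i maps fiber into powerset
      intro A hA
      have hgr := (Finset.mem_filter.mp hA).2
      obtain ⟨-, hInt, hExt⟩ := greedy_eq_iff.mp hgr
      rw [Finset.mem_powerset]
      intro z hz
      obtain ⟨hzA, hz2⟩ := Finset.mem_sdiff.mp hz
      by_cases hzB : z ∈ B
      · have hzIA : z ∈ IA := by
          by_contra h
          exact hz2 (Finset.mem_sdiff.mpr ⟨hzB, h⟩)
        exact Finset.mem_union_left _ hzIA
      · exact Finset.mem_union_right _ (mem_extAct.mpr (hExt z hzA hzB))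
    · -- j maps powerset into fiber
      intro C hCmem
      rw [Finset.mem_powerset] at hCmem
      exact Finset.mem_filter.mpr ⟨Finset.mem_powerset.mpr (Finset.subset_univ _),
        interval_greedy hB hCmem⟩
    · -- left inverse
      intro A hA
      have hgr := (Finset.mem_filter.mp hA).2
      obtain ⟨-, hInt, hExt⟩ := greedy_eq_iff.mp hgr
      have hsubA : B \ IA ⊆ A := by
        intro e he
        obtain ⟨heB, heIA⟩ := Finset.mem_sdiff.mp he
        by_contra h
        exact heIA (mem_intAct.mpr (hInt e heB h))
      exact Finset.union_sdiff_of_subset hsubA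
    · -- right inverse
      intro C hCmem
      rw [Finset.mem_powerset] at hCmem
      exact Finset.union_sdiff_cancel_left (interval_disjoint hCmem)
    · -- values agree
      intro A hA
      have hgr := (Finset.mem_filter.mp hA).2
      obtain ⟨-, hInt, hExt⟩ := greedy_eq_iff.mp hgr
      have hsubA : B \ IA ⊆ A := by
        intro e he
        obtain ⟨heB, heIA⟩ := Finset.mem_sdiff.mp he
        by_contra h
        exact heIA (mem_intAct.mpr (hInt e heB h))
      rw [Finset.union_sdiff_of_subset hsubA]
  rw [step1]
  -- pointwise rewriting and evaluation via ∏ (f + g)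
  have step2 : ∀ C ∈ s.powerset,
      (-1 : ℤ) ^ ((B \ IA) ∪ C).card * (n : ℤ) ^ kc ends ((B \ IA) ∪ C)
      = ((-1 : ℤ) ^ (B \ IA).card * (n : ℤ) ^ kc ends (univ : Finset E)) *
          ((∏ _i ∈ C, (-1 : ℤ)) * ∏ i ∈ s \ C, (if i ∈ IA then (n : ℤ) else 1)) := by
    intro C hCmem
    rw [Finset.mem_powerset] at hCmem
    have hcard : ((B \ IA) ∪ C).card = (B \ IA).card + C.card :=
      Finset.card_union_of_disjoint (interval_disjoint hCmem)
    have hkc := interval_kc hB hCmem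
    have hprod1 : (∏ _i ∈ C, (-1 : ℤ)) = (-1 : ℤ) ^ C.card := by
      rw [Finset.prod_const]
    have hinter : (s \ C) ∩ IA = IA \ C := by
      ext z
      simp only [Finset.mem_inter, Finset.mem_sdiff]
      constructor
      · rintro ⟨⟨-, h2⟩, h3⟩; exact ⟨h3, h2⟩
      · rintro ⟨h1, h2⟩; exact ⟨⟨hIAs h1, h2⟩, h1⟩
    have hprod2 : (∏ i ∈ s \ C, (if i ∈ IA then (n : ℤ) else 1)) = (n : ℤ) ^ (IA \ C).card := by
      rw [Finset.prod_ite_mem, hinter, Finset.prod_const]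
    rw [hcard, hkc, hprod1, hprod2, pow_add, pow_add]
    ring
  rw [Finset.sum_congr rfl step2, ← Finset.mul_sum, ← Finset.prod_add]
  congr 1
  have hsplit : ∀ i ∈ s, (-1 : ℤ) + (if i ∈ IA then (n : ℤ) else 1)
      = (if i ∈ IA then (n : ℤ) - 1 else 0) := by
    intro i _
    by_cases h : i ∈ IA <;> simp [h] <;> ring
  rw [Finset.prod_congr rfl hsplit, Finset.prod_ite]
  have hfilter1 : s.filter (fun i => i ∈ IA) = IA := by
    ext z
    simp only [Finset.mem_filter]
    exact ⟨fun h => h.2, fun h => ⟨hIAs h, h⟩⟩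
  have hfilter2 : s.filter (fun i => ¬ i ∈ IA) = XA := by
    ext z
    simp only [Finset.mem_filter, hs, Finset.mem_union]
    constructor
    · rintro ⟨h1 | h1, h2⟩
      · exact absurd h1 h2
      · exact h1
    · intro h
      exact ⟨Or.inr h, fun hzIA => extAct_not_mem h (intAct_subset hzIA)⟩
  rw [hfilter1, hfilter2, Finset.prod_const, Finset.prod_const]
end Part8

section Part9
variable {V E : Type} [Fintype V] [Fintype E] [DecidableEq E] [LinearOrder E]

lemma pow_identity {x i k v : ℕ} (h1 : x + i = v - k) (h2 : k ≤ v) (h3 : x + i + k = v) (n : ℤ) :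
    (-1 : ℤ) ^ x * n ^ k * ((n - 1) ^ i * 1) = (-1) ^ v * (-n) ^ k * (1 - n) ^ i := by
  have hn1 : ((n : ℤ) - 1) ^ i = (-1) ^ i * (1 - n) ^ i := by
    rw [← mul_pow]; congr 1; ring
  have hneg : (-n : ℤ) ^ k = (-1) ^ k * n ^ k := by
    rw [← mul_pow]; congr 1; ring
  have hv : (-1 : ℤ) ^ v = (-1) ^ x * (-1) ^ i * (-1) ^ k := by
    rw [← pow_add, ← pow_add, h3]
  have hk : (-1 : ℤ) ^ k * (-1) ^ k = 1 := by
    rw [← mul_pow]; norm_num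
  calc (-1 : ℤ) ^ x * n ^ k * ((n - 1) ^ i * 1)
      = ((-1) ^ x * (-1) ^ i * ((-1) ^ k * (-1) ^ k)) * n ^ k * (1 - n) ^ i := by
        rw [hn1, hk]; ring
    _ = (-1) ^ v * (-n) ^ k * (1 - n) ^ i := by rw [hv, hneg]; ring

theorem chromatic_spanning_forest' (ends : E → Sym2 V) (n : ℕ) :
    (chromCount ends n : ℤ) =
      (-1) ^ Fintype.card V * (-(n : ℤ)) ^ kc ends (Finset.univ : Finset E) *
        ∑ F ∈ Finset.univ.powerset.filter
            (fun A => IsSpanningForest ends A ∧ extAct ends A = ∅),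
          (1 - (n : ℤ)) ^ (intAct ends F).card := by
  rw [whitney ends n]
  rw [← Finset.sum_fiberwise_of_maps_to
    (t := univ.powerset.filter (IsSpanningForest ends)) (g := greedy ends)
    (fun A _ => Finset.mem_filter.mpr
      ⟨Finset.mem_powerset.mpr (Finset.subset_univ _), greedy_isf ends A⟩)
    (fun A => (-1 : ℤ) ^ A.card * (n : ℤ) ^ kc ends A)]
  have hval : ∀ B ∈ univ.powerset.filter (IsSpanningForest ends),
      ∑ A ∈ univ.powerset.filter (fun A => greedy ends A = B),
          (-1 : ℤ) ^ A.card * (n : ℤ) ^ kc ends A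
        = (if extAct ends B = ∅ then
            (-1 : ℤ) ^ Fintype.card V * (-(n : ℤ)) ^ kc ends (univ : Finset E) *
              (1 - (n : ℤ)) ^ (intAct ends B).card
          else 0) := by
    intro B hBmem
    have hBisf : IsSpanningForest ends B := (Finset.mem_filter.mp hBmem).2
    rw [fiber_sum n hBisf, zero_pow_card]
    by_cases hXA : extAct ends B = ∅
    · rw [if_pos hXA, if_pos hXA]
      have h1 : (B \ intAct ends B).card + (intAct ends B).card = B.card :=
        Finset.card_sdiff_add_card_eq_card intAct_subset
      have h2 : B.card + kc ends (univ : Finset E) = Fintype.card V := isf_card hBisf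
      exact pow_identity (by omega) (by omega) (by omega) (n : ℤ)
    · rw [if_neg hXA, if_neg hXA]
      ring
  rw [Finset.sum_congr rfl hval, ← Finset.sum_filter, Finset.filter_filter, ← Finset.mul_sum]
end Part9

/-- Spanning-forest representation of the chromatic polynomial:
`χ(G, n) = (−1)^{|V|} (−n)^{k(G)} ∑_{F : e(F)=0} (1 − n)^{i(F)}`. -/
theorem chromatic_spanning_forest {V E : Type} [Fintype V] [Fintype E] [DecidableEq E]
    [LinearOrder E] (ends : E → Sym2 V) (n : ℕ) :
    (chromCount ends n : ℤ) =
      (-1) ^ Fintype.card V * (-(n : ℤ)) ^ kc ends (Finset.univ : Finset E) *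
        ∑ F ∈ Finset.univ.powerset.filter
            (fun A => IsSpanningForest ends A ∧ extAct ends A = ∅),
          (1 - (n : ℤ)) ^ (intAct ends F).card := by
  exact chromatic_spanning_forest' ends n
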